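/- A nonzero matrix Z of size d_A d_B × d_A d_B over ℂ factorizes as a Kronecker product Z = X ⊗ Y (with X of size d_A and Y of size d_B) if and only if its realignment R(Z) has rank 1. -/

import Mathlib

open Matrix Kronecker
open scoped ComplexOrder

/-- Realignment of a matrix on a bipartite system:
`R(Z)_{(m,n),(μ,ν)} = Z_{(m,μ),(n,ν)}`. -/
def realign {dA dB : Type*} (Z : Matrix (dA × dB) (dA × dB) ℂ) :
    Matrix (dA × dA) (dB × dB) ℂ :=
  Matrix.of fun p q => Z (p.1, q.1) (p.2, q.2)

lemma vecMulVec_mulVec_aux {m n : Type*} [Fintype n] (x : m → ℂ) (y : n → ℂ) (v : n → ℂ) :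
    Matrix.vecMulVec x y *ᵥ v = (y ⬝ᵥ v) • x := by
  ext i
  simp only [Matrix.mulVec, Matrix.vecMulVec, dotProduct, Pi.smul_apply, smul_eq_mul,
    Matrix.of_apply, Finset.sum_mul]
  exact Finset.sum_congr rfl fun j _ => by ring

lemma rank_vecMulVec_eq_one {m n : Type*} [Fintype m] [Fintype n] [DecidableEq n]
    (x : m → ℂ) (y : n → ℂ) (hx : x ≠ 0) (hy : y ≠ 0) :
    (Matrix.vecMulVec x y).rank = 1 := by
  rw [Matrix.rank]
  have hrange : LinearMap.range (Matrix.vecMulVec x y).mulVecLin = Submodule.span ℂ {x} := by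
    apply le_antisymm
    · rintro _ ⟨v, rfl⟩
      rw [Matrix.mulVecLin_apply, vecMulVec_mulVec_aux]
      exact Submodule.smul_mem _ _ (Submodule.mem_span_singleton_self x)
    · rw [Submodule.span_singleton_le_iff_mem]
      have hys : y ⬝ᵥ star y ≠ 0 := fun h => hy (dotProduct_self_star_eq_zero.mp h)
      refine ⟨(y ⬝ᵥ star y)⁻¹ • star y, ?_⟩
      rw [Matrix.mulVecLin_apply, Matrix.mulVec_smul, vecMulVec_mulVec_aux, smul_smul,
        inv_mul_cancel₀ hys, one_smul]
  rw [hrange]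
  exact finrank_span_singleton hx

lemma eq_vecMulVec_of_rank_eq_one {m n : Type*} [Fintype m] [Fintype n] [DecidableEq n]
    {M : Matrix m n ℂ} (h : M.rank = 1) :
    ∃ (x : m → ℂ) (y : n → ℂ), M = Matrix.vecMulVec x y := by
  rw [Matrix.rank, finrank_eq_one_iff'] at h
  obtain ⟨v₀, -, hspan⟩ := h
  have key : ∀ q : n, ∃ c : ℂ, ∀ i, c * (v₀ : m → ℂ) i = M i q := by
    intro q
    obtain ⟨c, hc⟩ := hspan ⟨M *ᵥ Pi.single q 1, ⟨Pi.single q 1, rfl⟩⟩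
    refine ⟨c, fun i => ?_⟩
    have := congrFun (congrArg Subtype.val hc) i
    simpa using this
  choose c hc using key
  refine ⟨(v₀ : m → ℂ), c, ?_⟩
  ext i q
  rw [Matrix.vecMulVec_apply, mul_comm]
  exact (hc q i).symm

/-- A nonzero matrix factorizes as a Kronecker product iff its realignment has rank 1. -/
theorem kronecker_factorization_iff_rank_realign_eq_one {dA dB : ℕ}
    (Z : Matrix (Fin dA × Fin dB) (Fin dA × Fin dB) ℂ) (hZ : Z ≠ 0) :
    (∃ (X : Matrix (Fin dA) (Fin dA) ℂ) (Y : Matrix (Fin dB) (Fin dB) ℂ),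
      Z = X ⊗ₖ Y) ↔ (realign Z).rank = 1 := by
  constructor
  · rintro ⟨X, Y, rfl⟩
    have hre : realign (X ⊗ₖ Y) =
        Matrix.vecMulVec (fun p : Fin dA × Fin dA => X p.1 p.2)
          (fun q : Fin dB × Fin dB => Y q.1 q.2) := by
      ext ⟨m, n⟩ ⟨μ, ν⟩
      rfl
    rw [hre]
    refine rank_vecMulVec_eq_one _ _ ?_ ?_
    · intro hx
      apply hZ
      ext ⟨m, μ⟩ ⟨n, ν⟩
      have : X m n = 0 := congrFun hx (m, n)
      simp [Matrix.kroneckerMap_apply, this]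
    · intro hy
      apply hZ
      ext ⟨m, μ⟩ ⟨n, ν⟩
      have : Y μ ν = 0 := congrFun hy (μ, ν)
      simp [Matrix.kroneckerMap_apply, this]
  · intro h
    obtain ⟨x, y, hxy⟩ := eq_vecMulVec_of_rank_eq_one h
    refine ⟨Matrix.of fun m n => x (m, n), Matrix.of fun μ ν => y (μ, ν), ?_⟩
    ext ⟨m, μ⟩ ⟨n, ν⟩
    have := congrFun (congrFun hxy (m, n)) (μ, ν)
    exact this
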